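/- Assume each M_i satisfies condition (H₁): lim_{t→∞} t^{1−p^*/p} M_i(t) = 0; assume B > 0, C > 0, the Sobolev-type bounds B ≤ a S^{−p^*/p} A^{p^*/p} and C ≤ γ S^{−q/p} ω^{(p^*−q)/p^*} A^{q/p}, and 0 < λ < λ_*. Then there exist t₁ and t₂ with 0 < t₁ < t_max(A) < t₂ and ψ(t₁) = ψ(t₂) = 0, where t_max(A) = (m(p−q)S^{p^*/p}/(a(p^*−q)))^{1/(p^*−p)} A^{−1/p}. (This is the core of the paper's Lemma producing points of the Nehari submanifolds N_λ⁺ and N_λ⁻.) -/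
import Mathlib


open Filter Topology

set_option maxHeartbeats 2000000

private lemma eq_of_log_eq {x y : ℝ} (hx : 0 < x) (hy : 0 < y)
    (h : Real.log x = Real.log y) : x = y := by
  rw [← Real.exp_log hx, ← Real.exp_log hy, h]

/-- Core of the paper's Lemma 2.2: for `0 < λ < λ_*` there exist
`0 < t₁ < t_max(A) < t₂` with `ψ(t₁) = ψ(t₂) = 0`. -/
theorem stmt_5 (q p pstar a S γ lam ω m₁ m₂ m A₁ A₂ A B C : ℝ)
    (M₁ M₂ : ℝ → ℝ)
    (hq : 1 < q) (hqp : q < p) (hppstar : p < pstar)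
    (ha : 0 < a) (hS : 0 < S) (hγ : 0 < γ) (hω : 0 < ω)
    (hM₁c : ContinuousOn M₁ (Set.Ici 0)) (hM₂c : ContinuousOn M₂ (Set.Ici 0))
    (hm₁ : 0 < m₁) (hm₂ : 0 < m₂)
    (hM₁ : ∀ t : ℝ, 0 ≤ t → m₁ ≤ M₁ t) (hM₂ : ∀ t : ℝ, 0 ≤ t → m₂ ≤ M₂ t)
    (hm : m = min m₁ m₂)
    (hH₁M₁ : Tendsto (fun t : ℝ => t ^ (1 - pstar / p) * M₁ t) atTop (𝓝 0))
    (hH₁M₂ : Tendsto (fun t : ℝ => t ^ (1 - pstar / p) * M₂ t) atTop (𝓝 0))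
    (hA₁ : 0 < A₁) (hA₂ : 0 < A₂) (hA : A = A₁ + A₂)
    (hB : 0 < B) (hC : 0 < C)
    (hBle : B ≤ a * S ^ (-(pstar / p)) * A ^ (pstar / p))
    (hCle : C ≤ γ * S ^ (-(q / p)) * ω ^ ((pstar - q) / pstar) * A ^ (q / p))
    (lamstar : ℝ)
    (hlamstar : lamstar =
      (m * S) ^ ((pstar - q) / (pstar - p)) / (γ * q * ω ^ ((pstar - q) / pstar))
        * ((pstar - p) / (pstar - q))
        * ((p - q) / ((pstar - q) * a)) ^ ((p - q) / (pstar - p)))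
    (hlam : 0 < lam) (hlamlt : lam < lamstar)
    (tmax : ℝ)
    (htmax : tmax =
      (m * (p - q) * S ^ (pstar / p) / (a * (pstar - q))) ^ (1 / (pstar - p))
        * A ^ (-(1 / p)))
    (ψ : ℝ → ℝ)
    (hψ : ∀ t : ℝ, ψ t =
      t ^ (p - q) * (A₁ * M₁ (t ^ p * A₁) + A₂ * M₂ (t ^ p * A₂))
        - t ^ (pstar - q) * B - lam * q * C) :
    ∃ t₁ t₂ : ℝ, 0 < t₁ ∧ t₁ < tmax ∧ tmax < t₂ ∧ ψ t₁ = 0 ∧ ψ t₂ = 0 := by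
  have hp : 0 < p := by linarith
  have hq0 : 0 < q := by linarith
  have hP : 0 < pstar := by linarith
  have hpq : 0 < p - q := by linarith
  have hPq : 0 < pstar - q := by linarith
  have hPp : 0 < pstar - p := by linarith
  have hp0 : p ≠ 0 := ne_of_gt hp
  have hP0 : pstar ≠ 0 := ne_of_gt hP
  have hPp0 : pstar - p ≠ 0 := ne_of_gt hPp
  have hPq0 : pstar - q ≠ 0 := ne_of_gt hPq
  have hAp : 0 < A := by rw [hA]; linarith
  have hm0 : 0 < m := by rw [hm]; exact lt_min hm₁ hm₂
  have hmm1 : m ≤ m₁ := hm ▸ min_le_left _ _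
  have hmm2 : m ≤ m₂ := hm ▸ min_le_right _ _
  have htm : 0 < tmax := by rw [htmax]; positivity
  -- continuity of ψ on [0, ∞)
  have hcont : ContinuousOn ψ (Set.Ici (0:ℝ)) := by
    have hfun : Set.EqOn ψ (fun t : ℝ =>
        t ^ (p - q) * (A₁ * M₁ (t ^ p * A₁) + A₂ * M₂ (t ^ p * A₂))
          - t ^ (pstar - q) * B - lam * q * C) (Set.Ici 0) := fun t _ => hψ t
    apply ContinuousOn.congr ?_ hfun
    have hbase : ContinuousOn (fun t : ℝ => t) (Set.Ici 0) := continuousOn_id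
    have hr1 : ContinuousOn (fun t : ℝ => t ^ (p - q)) (Set.Ici 0) :=
      hbase.rpow_const fun x _ => Or.inr hpq.le
    have hr2 : ContinuousOn (fun t : ℝ => t ^ (pstar - q)) (Set.Ici 0) :=
      hbase.rpow_const fun x _ => Or.inr hPq.le
    have hrp : ContinuousOn (fun t : ℝ => t ^ p) (Set.Ici 0) :=
      hbase.rpow_const fun x _ => Or.inr hp.le
    have hg1 : ContinuousOn (fun t : ℝ => M₁ (t ^ p * A₁)) (Set.Ici 0) := by
      apply hM₁c.comp (hrp.mul continuousOn_const)
      intro x hx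
      exact mul_nonneg (Real.rpow_nonneg hx p) hA₁.le
    have hg2 : ContinuousOn (fun t : ℝ => M₂ (t ^ p * A₂)) (Set.Ici 0) := by
      apply hM₂c.comp (hrp.mul continuousOn_const)
      intro x hx
      exact mul_nonneg (Real.rpow_nonneg hx p) hA₂.le
    exact ((hr1.mul ((continuousOn_const.mul hg1).add (continuousOn_const.mul hg2))).sub
      (hr2.mul continuousOn_const)).sub continuousOn_const
  -- value at 0 is negative
  have hψ0 : ψ 0 < 0 := by
    rw [hψ, Real.zero_rpow hpq.ne', Real.zero_rpow hPq.ne']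
    nlinarith [mul_pos (mul_pos hlam hq0) hC]
  -- the two key algebraic identities
  have hI : tmax ^ (pstar - q) * (a * S ^ (-(pstar / p)) * A ^ (pstar / p))
      = ((p - q) / (pstar - q)) * (tmax ^ (p - q) * m * A) := by
    rw [htmax]
    apply eq_of_log_eq (by positivity) (by positivity)
    simp -failIfUnchanged (disch := positivity) only [Real.log_mul, Real.log_rpow, Real.log_div]
    field_simp
    ring
  have hII : lamstar * q * (γ * S ^ (-(q / p)) * ω ^ ((pstar - q) / pstar) * A ^ (q / p))
      = ((pstar - p) / (pstar - q)) * (tmax ^ (p - q) * m * A) := by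
    rw [htmax, hlamstar]
    apply eq_of_log_eq (by positivity) (by positivity)
    simp -failIfUnchanged (disch := positivity) only [Real.log_mul, Real.log_rpow, Real.log_div]
    field_simp
    ring
  have hsum : tmax ^ (p - q) * (m * A)
      = tmax ^ (pstar - q) * (a * S ^ (-(pstar / p)) * A ^ (pstar / p))
        + lamstar * q * (γ * S ^ (-(q / p)) * ω ^ ((pstar - q) / pstar) * A ^ (q / p)) := by
    rw [hI, hII]
    field_simp
    ring
  -- value at tmax is positive
  have hψtm : 0 < ψ tmax := by
    rw [hψ]
    have hx1 : (0:ℝ) ≤ tmax ^ p * A₁ := by positivity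
    have hx2 : (0:ℝ) ≤ tmax ^ p * A₂ := by positivity
    have hK : m * A ≤ A₁ * M₁ (tmax ^ p * A₁) + A₂ * M₂ (tmax ^ p * A₂) := by
      have h1 := hM₁ _ hx1
      have h2 := hM₂ _ hx2
      have e1 : m * A₁ ≤ A₁ * M₁ (tmax ^ p * A₁) := by nlinarith
      have e2 : m * A₂ ≤ A₂ * M₂ (tmax ^ p * A₂) := by nlinarith
      rw [hA]; nlinarith
    have hpos1 : (0:ℝ) < tmax ^ (p - q) := by positivity
    have hpos2 : (0:ℝ) < tmax ^ (pstar - q) := by positivity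
    have hKterm : tmax ^ (p - q) * (m * A)
        ≤ tmax ^ (p - q) * (A₁ * M₁ (tmax ^ p * A₁) + A₂ * M₂ (tmax ^ p * A₂)) :=
      mul_le_mul_of_nonneg_left hK hpos1.le
    have hBterm : tmax ^ (pstar - q) * B
        ≤ tmax ^ (pstar - q) * (a * S ^ (-(pstar / p)) * A ^ (pstar / p)) :=
      mul_le_mul_of_nonneg_left hBle hpos2.le
    have hCb : (0:ℝ) < γ * S ^ (-(q / p)) * ω ^ ((pstar - q) / pstar) * A ^ (q / p) := by
      positivity
    have hCterm : lam * q * C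
        < lamstar * q * (γ * S ^ (-(q / p)) * ω ^ ((pstar - q) / pstar) * A ^ (q / p)) := by
      have h1 : lam * q * C ≤ lam * q
          * (γ * S ^ (-(q / p)) * ω ^ ((pstar - q) / pstar) * A ^ (q / p)) :=
        mul_le_mul_of_nonneg_left hCle (by positivity)
      have h2 : lam * q * (γ * S ^ (-(q / p)) * ω ^ ((pstar - q) / pstar) * A ^ (q / p))
          < lamstar * q
          * (γ * S ^ (-(q / p)) * ω ^ ((pstar - q) / pstar) * A ^ (q / p)) := by
        apply mul_lt_mul_of_pos_right _ hCb
        exact mul_lt_mul_of_pos_right hlamlt hq0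
      linarith
    linarith [hsum, hKterm, hBterm, hCterm]
  -- first zero via IVT on [0, tmax]
  have hIcc1 : Set.Icc (0:ℝ) tmax ⊆ Set.Ici 0 := Set.Icc_subset_Ici_self
  obtain ⟨t₁, ht₁mem, ht₁val⟩ :=
    intermediate_value_Icc htm.le (hcont.mono hIcc1) ⟨hψ0.le, hψtm.le⟩
  have ht₁pos : 0 < t₁ := by
    rcases eq_or_lt_of_le ht₁mem.1 with h | h
    · exfalso; rw [← h] at ht₁val; linarith
    · exact h
  have ht₁lt : t₁ < tmax := by
    rcases eq_or_lt_of_le ht₁mem.2 with h | h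
    · exfalso; rw [h] at ht₁val; linarith
    · exact h
  -- behaviour at infinity
  have hKtend : Tendsto (fun t : ℝ =>
      t ^ (p - pstar) * (A₁ * M₁ (t ^ p * A₁) + A₂ * M₂ (t ^ p * A₂))) atTop (𝓝 0) := by
    have hcomp1 : Tendsto (fun t : ℝ => t ^ p * A₁) atTop atTop :=
      (tendsto_rpow_atTop hp).atTop_mul_const hA₁
    have hcomp2 : Tendsto (fun t : ℝ => t ^ p * A₂) atTop atTop :=
      (tendsto_rpow_atTop hp).atTop_mul_const hA₂
    have key : ∀ (A' : ℝ), 0 < A' → ∀ (M : ℝ → ℝ),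
        Tendsto (fun t : ℝ => t ^ (1 - pstar / p) * M t) atTop (𝓝 0) →
        Tendsto (fun t : ℝ => t ^ p * A') atTop atTop →
        Tendsto (fun t : ℝ => t ^ (p - pstar) * (A' * M (t ^ p * A'))) atTop (𝓝 0) := by
      intro A' hA' M hM hcomp
      have h1 : Tendsto (fun t : ℝ =>
          A' ^ (pstar / p) * ((t ^ p * A') ^ (1 - pstar / p) * M (t ^ p * A')))
          atTop (𝓝 0) := by
        have := (hM.comp hcomp).const_mul (A' ^ (pstar / p))
        simpa using this
      apply h1.congr'
      filter_upwards [eventually_gt_atTop (0:ℝ)] with t ht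
      have h2 : (t ^ p * A') ^ (1 - pstar / p)
          = t ^ (p - pstar) * A' ^ (1 - pstar / p) := by
        rw [Real.mul_rpow (by positivity) hA'.le, ← Real.rpow_mul ht.le]
        congr 2
        field_simp
      have h3 : A' ^ (pstar / p) * A' ^ (1 - pstar / p) = A' := by
        rw [← Real.rpow_add hA', show pstar / p + (1 - pstar / p) = 1 by ring,
          Real.rpow_one]
      rw [h2]
      linear_combination (t ^ (p - pstar) * M (t ^ p * A')) * h3
    have h1' := key A₁ hA₁ M₁ hH₁M₁ hcomp1
    have h2' := key A₂ hA₂ M₂ hH₁M₂ hcomp2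
    have := h1'.add h2'
    simpa [mul_add] using this
  have hTlarge : ∀ᶠ t : ℝ in atTop,
      t ^ (p - pstar) * (A₁ * M₁ (t ^ p * A₁) + A₂ * M₂ (t ^ p * A₂)) < B :=
    hKtend.eventually_lt_const hB
  obtain ⟨T, hTall⟩ :=
    ((hTlarge.and (eventually_gt_atTop tmax)).and (eventually_gt_atTop (0:ℝ))).exists
  obtain ⟨⟨hT1, hT2⟩, hT3⟩ := hTall
  have hψT : ψ T < 0 := by
    rw [hψ, show p - q = (pstar - q) + (p - pstar) by ring, Real.rpow_add hT3]
    have h2 : (0:ℝ) < T ^ (pstar - q) := by positivity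
    have h4 := mul_lt_mul_of_pos_left hT1 h2
    nlinarith [mul_pos (mul_pos hlam hq0) hC]
  -- second zero via IVT on [tmax, T]
  have hIcc2 : Set.Icc tmax T ⊆ Set.Ici 0 := fun x hx => le_trans htm.le hx.1
  obtain ⟨t₂, ht₂mem, ht₂val⟩ :=
    intermediate_value_Icc' hT2.le (hcont.mono hIcc2) ⟨hψT.le, hψtm.le⟩
  have ht₂gt : tmax < t₂ := by
    rcases eq_or_lt_of_le ht₂mem.1 with h | h
    · exfalso; rw [← h] at ht₂val; linarith
    · exact h
  exact ⟨t₁, t₂, ht₁pos, ht₁lt, ht₂gt, ht₁val, ht₂val⟩
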